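/- arXiv:math/0309396 — 3 statements merged into one kernel-verified Lean document; each statement's English description precedes it below -/
import Mathlib

section
/- Let G be a group, N a normal subgroup, π : N → U(H) a unitary representation, V : G → U(H) a map with V_s π(n) V_s* = π(s n s⁻¹) and V_{sn} = V_s π(n) for all s ∈ G, n ∈ N. Let σ(s,t) = V_s V_t V_{st}* and α_s = Ad V_s. Suppose ν : G/N → U(H) takes values in π(N)' and satisfies ν(sN) α_s(ν(tN)) σ(s,t) ν(stN)* = 1 for all s, t ∈ G. Then ρ(s) := ν(sN) V_s defines a group homomorphism ρ : G → U(H) extending π (i.e., ρ(n) = π(n) for n ∈ N). -/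
/-- If the twisted action `(α, σ)` is trivialized by a Borel map `ν` with values in the
commutant, then `ρ(s) = ν(sN) V_s` is a unitary representation of `G` extending `π`. -/
theorem stmt6 {G : Type*} [Group G] (N : Subgroup G) (hN : N.Normal)
    {H : Type*} [NormedAddCommGroup H] [InnerProductSpace ℂ H] [CompleteSpace H]
    (π : N →* unitary (H →L[ℂ] H)) (V : G → unitary (H →L[ℂ] H))
    (hV : ∀ (s : G) (n : N),
      (V s : H →L[ℂ] H) * (π n : H →L[ℂ] H) * star (V s : H →L[ℂ] H)
        = (π ⟨s * n * s⁻¹, hN.conj_mem (n : G) n.2 s⟩ : H →L[ℂ] H))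
    (hVn : ∀ (s : G) (n : N), V (s * (n : G)) = V s * π n)
    (hVe : V 1 = 1)
    (ν : G ⧸ N → unitary (H →L[ℂ] H)) (hνe : ν 1 = 1)
    (hνcomm : ∀ (x : G ⧸ N) (n : N),
      (ν x : H →L[ℂ] H) * (π n : H →L[ℂ] H) = (π n : H →L[ℂ] H) * (ν x : H →L[ℂ] H))
    (htriv : ∀ s t : G,
      ν (QuotientGroup.mk s) * (V s * ν (QuotientGroup.mk t) * (V s)⁻¹)
        * (V s * V t * (V (s * t))⁻¹) * (ν (QuotientGroup.mk (s * t)))⁻¹ = 1) :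
    ∀ ρ : G → unitary (H →L[ℂ] H),
      (ρ = fun s => ν (QuotientGroup.mk s) * V s) →
      (∀ s t : G, ρ (s * t) = ρ s * ρ t) ∧ (∀ n : N, ρ (n : G) = π n) := by
  intro ρ hρ
  subst hρ
  constructor
  · intro s t
    have h := htriv s t
    have h2 : ν (QuotientGroup.mk s) * V s * ν (QuotientGroup.mk t) * V t
        = ν (QuotientGroup.mk (s * t)) * V (s * t) := by
      have := mul_eq_one_iff_eq_inv.mp h
      rw [inv_inv] at this
      calc ν (QuotientGroup.mk s) * V s * ν (QuotientGroup.mk t) * V t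
          = ν (QuotientGroup.mk s) * (V s * ν (QuotientGroup.mk t) * (V s)⁻¹)
            * (V s * V t * (V (s * t))⁻¹) * V (s * t) := by group
        _ = ν (QuotientGroup.mk (s * t)) * V (s * t) := by rw [this]
    simpa [mul_assoc] using h2.symm
  · intro n
    have h1 : QuotientGroup.mk (n : G) = (1 : G ⧸ N) := by
      simpa using (QuotientGroup.eq_one_iff (n : G)).mpr n.2
    have h2 : V (n : G) = π n := by
      have := hVn 1 n
      simpa [hVe] using this
    simp [h1, hνe, h2]
end

section
/- Let G be a group, N a normal subgroup, π : N → U(H) a unitary representation that extends to a homomorphism ρ : G → U(H) with ρ|_N = π. Let V : G → U(H) satisfy V_s π(n) V_s* = π(s n s⁻¹), V_{sn} = V_s π(n), V_e = 1, and set σ(s,t) = V_s V_t V_{st}*, α_s = Ad V_s. Define ν_s = ρ(s) V_s*. Then ν_s depends only on the coset sN, takes values in the unitary group of the commutant π(N)', and satisfies ν_s α_s(ν_t) σ(s,t) ν_{st}* = 1 for all s, t ∈ G. -/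
/-- If `ρ` extends `π`, then `ν_s = ρ(s) V_s*` depends only on the coset `sN`, takes values
in the unitary group of the commutant `π(N)'`, and trivializes the twisted action `(α, σ)`. -/
theorem stmt7 {G : Type*} [Group G] (N : Subgroup G) (hN : N.Normal)
    {H : Type*} [NormedAddCommGroup H] [InnerProductSpace ℂ H] [CompleteSpace H]
    (π : N →* unitary (H →L[ℂ] H)) (ρ : G →* unitary (H →L[ℂ] H))
    (hext : ∀ n : N, ρ (n : G) = π n)
    (V : G → unitary (H →L[ℂ] H))
    (hV : ∀ (s : G) (n : N),
      (V s : H →L[ℂ] H) * (π n : H →L[ℂ] H) * star (V s : H →L[ℂ] H)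
        = (π ⟨s * n * s⁻¹, hN.conj_mem (n : G) n.2 s⟩ : H →L[ℂ] H))
    (hVn : ∀ (s : G) (n : N), V (s * (n : G)) = V s * π n)
    (hVe : V 1 = 1) :
    ∀ ν : G → unitary (H →L[ℂ] H),
      (ν = fun s => ρ s * (V s)⁻¹) →
      (∀ (s : G) (n : N), ν (s * (n : G)) = ν s) ∧
      (∀ (s : G) (n : N),
        (ν s : H →L[ℂ] H) * (π n : H →L[ℂ] H) = (π n : H →L[ℂ] H) * (ν s : H →L[ℂ] H)) ∧
      (∀ s t : G,
        ν s * (V s * ν t * (V s)⁻¹) * (V s * V t * (V (s * t))⁻¹) * (ν (s * t))⁻¹ = 1) := by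
  intro ν hν
  subst hν
  refine ⟨?_, ?_, ?_⟩
  · intro s n
    simp only [map_mul, hVn, hext, mul_inv_rev]
    group
  · intro s n
    -- star (V s) * π n = π (s⁻¹ n s) * star (V s)
    set n' : N := ⟨s⁻¹ * (n : G) * s, by
      simpa using hN.conj_mem (n : G) n.2 s⁻¹⟩ with hn'
    have key : (π n : H →L[ℂ] H)
        = (V s : H →L[ℂ] H) * (π n' : H →L[ℂ] H) * star (V s : H →L[ℂ] H) := by
      rw [hV s n']
      congr 2
      apply Subtype.ext
      show (n : G) = s * (s⁻¹ * (n : G) * s) * s⁻¹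
      group
    have hstar : star (V s : H →L[ℂ] H) * (π n : H →L[ℂ] H)
        = (π n' : H →L[ℂ] H) * star (V s : H →L[ℂ] H) := by
      rw [key]
      have h1 : star (V s : H →L[ℂ] H) * (V s : H →L[ℂ] H) = 1 := (V s).2.1
      calc star (V s : H →L[ℂ] H) * ((V s : H →L[ℂ] H) * (π n' : H →L[ℂ] H)
            * star (V s : H →L[ℂ] H))
          = (star (V s : H →L[ℂ] H) * (V s : H →L[ℂ] H)) * (π n' : H →L[ℂ] H)
            * star (V s : H →L[ℂ] H) := by simp only [mul_assoc]
        _ = (π n' : H →L[ℂ] H) * star (V s : H →L[ℂ] H) := by rw [h1, one_mul]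
    have hcoe : ((ρ s * (V s)⁻¹ : unitary (H →L[ℂ] H)) : H →L[ℂ] H)
        = (ρ s : H →L[ℂ] H) * star (V s : H →L[ℂ] H) := rfl
    rw [hcoe, mul_assoc, hstar, ← mul_assoc]
    have : (ρ s : H →L[ℂ] H) * (π n' : H →L[ℂ] H) = (π n : H →L[ℂ] H) * (ρ s : H →L[ℂ] H) := by
      rw [← hext n', ← hext n]
      have : (ρ s * ρ (n' : G) : unitary (H →L[ℂ] H)) = ρ (n : G) * ρ s := by
        rw [← map_mul, ← map_mul]
        congr 1
        show s * (s⁻¹ * (n : G) * s) = (n : G) * s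
        group
      exact congrArg Subtype.val this
    rw [this, mul_assoc]
  · intro s t
    simp only [map_mul, mul_inv_rev]
    group
end

section
/- Let G be a finite group, N a normal subgroup with G/N cyclic of order m, and π : N → U(H) a G-invariant irreducible unitary representation on a finite-dimensional complex Hilbert space H. Then π extends to a unitary representation of G on H. -/
/-- Clifford's theorem for cyclic quotients: if `G/N` is finite cyclic, then every
`G`-invariant irreducible unitary representation of `N` on a finite-dimensional Hilbert
space extends to a unitary representation of `G`. -/
theorem stmt15 {G : Type*} [Group G] [Finite G] (N : Subgroup G) (hN : N.Normal)
    (hcyc : IsCyclic (G ⧸ N))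
    {H : Type*} [NormedAddCommGroup H] [InnerProductSpace ℂ H] [CompleteSpace H]
    [FiniteDimensional ℂ H]
    (π : N →* unitary (H →L[ℂ] H))
    (hirr : ∀ T : H →L[ℂ] H,
      (∀ n : N, T * (π n : H →L[ℂ] H) = (π n : H →L[ℂ] H) * T) → ∃ c : ℂ, T = c • 1)
    (hinv : ∀ s : G, ∃ W : unitary (H →L[ℂ] H), ∀ n : N,
      (W : H →L[ℂ] H) * (π n : H →L[ℂ] H) * star (W : H →L[ℂ] H)
        = (π ⟨s * n * s⁻¹, hN.conj_mem (n : G) n.2 s⟩ : H →L[ℂ] H)) :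
    ∃ ρ : G →* unitary (H →L[ℂ] H), ∀ n : N, ρ (n : G) = π n := by
  haveI := hN
  classical
  rcases subsingleton_or_nontrivial H with hsub | hnt
  · haveI : Subsingleton (H →L[ℂ] H) :=
      ⟨fun a b => ContinuousLinearMap.ext fun x => Subsingleton.elim _ _⟩
    exact ⟨1, fun n => Subsingleton.elim _ _⟩
  obtain ⟨t, ht⟩ := hcyc.exists_generator
  obtain ⟨s, hs⟩ := QuotientGroup.mk_surjective t
  set m : ℕ := orderOf t with hmdef
  have hm : 0 < m := orderOf_pos t
  have hmem : ∀ c : ℤ, s ^ c ∈ N ↔ (m : ℤ) ∣ c := by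
    intro c
    rw [← QuotientGroup.eq_one_iff, QuotientGroup.mk_zpow, hs,
      ← orderOf_dvd_iff_zpow_eq_one]
  obtain ⟨W₀, hW₀⟩ := hinv s
  have hWc : ∀ n : N, W₀ * π n * W₀⁻¹ = π ⟨s * ↑n * s⁻¹, hN.conj_mem _ n.2 s⟩ :=
    fun n => Subtype.ext (hW₀ n)
  -- integer-power conjugation lemma
  have zkey : ∀ (w : unitary (H →L[ℂ] H)),
      (∀ n : N, w * π n * w⁻¹ = π ⟨s * ↑n * s⁻¹, hN.conj_mem _ n.2 s⟩) →
      ∀ (k : ℤ) (n n' : N), (↑n' : G) = s ^ k * ↑n * (s ^ k)⁻¹ →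
      w ^ k * π n * (w ^ k)⁻¹ = π n' := by
    intro w hw k
    have hw' : ∀ (n n₂ : N), (↑n₂ : G) = s⁻¹ * ↑n * s → w⁻¹ * π n * w = π n₂ := by
      intro n n₂ h2
      have h3 := hw n₂
      have h4 : π ⟨s * ↑n₂ * s⁻¹, hN.conj_mem _ n₂.2 s⟩ = π n :=
        congrArg π (Subtype.ext (by show s * ↑n₂ * s⁻¹ = ↑n; rw [h2]; group))
      rw [h4] at h3
      rw [← h3]; group
    induction k using Int.induction_on with
    | zero =>
      intro n n' h
      have : n' = n := Subtype.ext (by simpa using h)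
      subst this
      simp
    | succ k ih =>
      intro n n' h
      set n₁ : N := ⟨s ^ (k : ℤ) * ↑n * (s ^ (k : ℤ))⁻¹, hN.conj_mem _ n.2 _⟩ with hn₁
      have hn' : n' = ⟨s * ↑n₁ * s⁻¹, hN.conj_mem _ n₁.2 s⟩ :=
        Subtype.ext (by rw [h]; show s ^ ((k : ℤ) + 1) * ↑n * (s ^ ((k : ℤ) + 1))⁻¹ = s * (s ^ (k : ℤ) * ↑n * (s ^ (k : ℤ))⁻¹) * s⁻¹; group)
      rw [hn', ← hw n₁, ← ih n n₁ rfl]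
      group
    | pred k ih =>
      intro n n' h
      set n₁ : N := ⟨s ^ (-(k : ℤ)) * ↑n * (s ^ (-(k : ℤ)))⁻¹, hN.conj_mem _ n.2 _⟩ with hn₁
      have hcoe : (↑n' : G) = s⁻¹ * ↑n₁ * s := by
        rw [h]; show s ^ (-(k : ℤ) - 1) * ↑n * (s ^ (-(k : ℤ) - 1))⁻¹ = s⁻¹ * (s ^ (-(k : ℤ)) * ↑n * (s ^ (-(k : ℤ)))⁻¹) * s; group
      rw [← hw' n₁ n' hcoe, ← ih n n₁ rfl]
      group
  -- s^m lies in N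
  have hsm : s ^ (m : ℤ) ∈ N := (hmem m).2 dvd_rfl
  set σ : N := ⟨s ^ (m : ℤ), hsm⟩ with hσ
  -- the commuting operator
  set T : unitary (H →L[ℂ] H) := (π σ)⁻¹ * W₀ ^ (m : ℤ) with hT
  have hcomm : ∀ n : N, T * π n = π n * T := by
    intro n
    have h1 := zkey W₀ hWc (m : ℤ) n ⟨s ^ (m : ℤ) * ↑n * (s ^ (m : ℤ))⁻¹, hN.conj_mem _ n.2 _⟩ rfl
    have h2 : (⟨s ^ (m : ℤ) * ↑n * (s ^ (m : ℤ))⁻¹, hN.conj_mem _ n.2 _⟩ : N) = σ * n * σ⁻¹ :=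
      Subtype.ext rfl
    have h1' : W₀ ^ (m : ℤ) * π n * (W₀ ^ (m : ℤ))⁻¹ = π σ * π n * (π σ)⁻¹ := by
      rw [h1, h2, map_mul, map_mul, map_inv]
    have h4 : W₀ ^ (m : ℤ) * π n = π σ * π n * (π σ)⁻¹ * W₀ ^ (m : ℤ) := by
      rw [← h1']; group
    calc (π σ)⁻¹ * W₀ ^ (m : ℤ) * π n = (π σ)⁻¹ * (W₀ ^ (m : ℤ) * π n) := by group
      _ = (π σ)⁻¹ * (π σ * π n * (π σ)⁻¹ * W₀ ^ (m : ℤ)) := by rw [h4]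
      _ = π n * ((π σ)⁻¹ * W₀ ^ (m : ℤ)) := by group
  obtain ⟨c, hc⟩ := hirr (T : H →L[ℂ] H) (fun n => congrArg Subtype.val (hcomm n))
  -- |c| = 1
  obtain ⟨x, hx⟩ := exists_ne (0 : H)
  have hcc : star c * c = 1 := by
    have h5 : star (T : H →L[ℂ] H) * (T : H →L[ℂ] H) = 1 := Unitary.coe_star_mul_self T
    rw [hc, star_smul, star_one, smul_mul_smul_comm, one_mul] at h5
    have h6 : (star c * c) • x = (1 : ℂ) • x := by
      have := congrArg (fun A : H →L[ℂ] H => A x) h5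
      simpa using this
    exact smul_left_injective ℂ hx h6
  have hcne : c ≠ 0 := by
    intro h; rw [h, star_zero, mul_zero] at hcc; exact zero_ne_one hcc
  -- m-th root
  obtain ⟨z, hz⟩ := IsAlgClosed.exists_pow_nat_eq (k := ℂ) c⁻¹ hm
  have hzz : star z * z = 1 := by
    have h7 : (star z * z) ^ m = 1 := by
      rw [mul_pow, ← star_pow, hz, star_inv₀]
      rw [← mul_inv_rev]
      rw [show c * star c = 1 by rw [mul_comm]; exact hcc]
      simp
    have h8 : star z * z = ((Complex.normSq z : ℝ) : ℂ) := by
      rw [Complex.star_def, mul_comm, Complex.mul_conj]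
    rw [h8] at h7 ⊢
    norm_cast at h7 ⊢
    have h9 : (0 : ℝ) ≤ Complex.normSq z := Complex.normSq_nonneg z
    rcases lt_trichotomy (Complex.normSq z) 1 with h | h | h
    · exfalso
      have := pow_lt_one₀ h9 h hm.ne'
      rw [h7] at this; exact lt_irrefl 1 this
    · exact h
    · exfalso
      have := one_lt_pow₀ h hm.ne'
      rw [h7] at this; exact lt_irrefl 1 this
  -- unitary scalar
  have humem : (z • (1 : H →L[ℂ] H)) ∈ unitary (H →L[ℂ] H) := by
    rw [Unitary.mem_iff]
    constructor
    · rw [star_smul, star_one, smul_mul_smul_comm, one_mul, hzz, one_smul]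
    · rw [star_smul, star_one, smul_mul_smul_comm, one_mul, mul_comm z, hzz, one_smul]
  set u : unitary (H →L[ℂ] H) := ⟨z • (1 : H →L[ℂ] H), humem⟩ with hu_def
  have hu : ∀ x : unitary (H →L[ℂ] H), u * x = x * u := by
    intro v
    apply Subtype.ext
    show (z • (1 : H →L[ℂ] H)) * ↑v = ↑v * (z • (1 : H →L[ℂ] H))
    rw [smul_mul_assoc, mul_smul_comm, one_mul, mul_one]
  set W : unitary (H →L[ℂ] H) := u * W₀ with hW_def
  have hWc' : ∀ n : N, W * π n * W⁻¹ = π ⟨s * ↑n * s⁻¹, hN.conj_mem _ n.2 s⟩ := by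
    intro n
    have h7 : W * π n * W⁻¹ = u * (W₀ * π n * W₀⁻¹) * u⁻¹ := by
      rw [hW_def]; group
    rw [h7, hu (W₀ * π n * W₀⁻¹), mul_assoc, mul_inv_cancel, mul_one, hWc n]
  -- W ^ m = π σ
  have hWm : W ^ (m : ℤ) = π σ := by
    have h8 : W ^ (m : ℤ) = u ^ (m : ℤ) * (π σ * T) := by
      rw [hW_def, (Commute.mul_zpow (hu W₀) (m : ℤ))]
      congr 1
      rw [hT]; group
    apply Subtype.ext
    rw [h8]
    have hum : ((u ^ (m : ℤ) : unitary (H →L[ℂ] H)) : H →L[ℂ] H) = c⁻¹ • 1 := by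
      rw [zpow_natCast]
      show ((u ^ m : unitary (H →L[ℂ] H)) : H →L[ℂ] H) = c⁻¹ • 1
      rw [SubmonoidClass.coe_pow]
      show (z • (1 : H →L[ℂ] H)) ^ m = c⁻¹ • 1
      rw [smul_pow, one_pow, hz]
    show ((u ^ (m : ℤ) : unitary (H →L[ℂ] H)) : H →L[ℂ] H) * ((π σ : unitary (H →L[ℂ] H)) * (T : H →L[ℂ] H)) = (π σ : H →L[ℂ] H)
    rw [hum, hc, smul_mul_assoc, one_mul, mul_smul_comm, smul_smul,
      inv_mul_cancel₀ hcne, one_smul, mul_one]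
  -- powers of s inside N are represented by powers of W
  have mlem : ∀ (a : ℤ) (ha : s ^ a ∈ N), W ^ a = π ⟨s ^ a, ha⟩ := by
    intro a ha
    obtain ⟨j, hj⟩ := (hmem a).1 ha
    subst hj
    rw [zpow_mul, hWm, ← map_zpow]
    exact congrArg π (Subtype.ext (by
      rw [SubgroupClass.coe_zpow]
      show (s ^ (m : ℤ)) ^ j = s ^ ((m : ℤ) * j)
      rw [← zpow_mul]))
  -- well-definedness
  have hwd : ∀ (g : G) (a b : ℤ) (ha : g * (s ^ a)⁻¹ ∈ N) (hb : g * (s ^ b)⁻¹ ∈ N),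
      π ⟨g * (s ^ a)⁻¹, ha⟩ * W ^ a = π ⟨g * (s ^ b)⁻¹, hb⟩ * W ^ b := by
    intro g a b ha hb
    have h10 : (g * (s ^ b)⁻¹)⁻¹ * (g * (s ^ a)⁻¹) = s ^ (b - a) := by
      rw [zpow_sub]; group
    have hba : s ^ (b - a) ∈ N := h10 ▸ N.mul_mem (N.inv_mem hb) ha
    have h11 : π ((⟨g * (s ^ b)⁻¹, hb⟩ : N)⁻¹ * ⟨g * (s ^ a)⁻¹, ha⟩) = W ^ (b - a) := by
      rw [mlem (b - a) hba]
      exact congrArg π (Subtype.ext h10)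
    have h12 : π ⟨g * (s ^ a)⁻¹, ha⟩ = π ⟨g * (s ^ b)⁻¹, hb⟩ * W ^ (b - a) := by
      rw [← h11, ← map_mul]
      exact congrArg π (by group)
    rw [h12, mul_assoc, ← zpow_add, sub_add_cancel]
  -- choose exponents
  have hsel : ∀ g : G, ∃ k : ℤ, g * (s ^ k)⁻¹ ∈ N := by
    intro g
    obtain ⟨k, hk⟩ := Subgroup.mem_zpowers_iff.mp (ht (QuotientGroup.mk g))
    refine ⟨k, ?_⟩
    rw [← QuotientGroup.eq_one_iff, QuotientGroup.mk_mul, QuotientGroup.mk_inv,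
      QuotientGroup.mk_zpow, hs, hk, mul_inv_cancel]
  choose κ hκ using hsel
  set f : G → unitary (H →L[ℂ] H) := fun g => π ⟨g * (s ^ κ g)⁻¹, hκ g⟩ * W ^ κ g with hf
  have hfwd : ∀ (g : G) (b : ℤ) (hb : g * (s ^ b)⁻¹ ∈ N),
      f g = π ⟨g * (s ^ b)⁻¹, hb⟩ * W ^ b :=
    fun g b hb => hwd g (κ g) b (hκ g) hb
  have hmul : ∀ g h : G, f (g * h) = f g * f h := by
    intro g h
    set nh : N := ⟨h * (s ^ κ h)⁻¹, hκ h⟩ with hnh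
    set nh' : N := ⟨s ^ κ g * ↑nh * (s ^ κ g)⁻¹, hN.conj_mem _ nh.2 _⟩ with hnh'
    have h13 : W ^ κ g * π nh * (W ^ κ g)⁻¹ = π nh' := zkey W hWc' (κ g) nh nh' rfl
    have h15 : (g * (s ^ κ g)⁻¹) * ↑nh' = g * h * (s ^ (κ g + κ h))⁻¹ := by
      show (g * (s ^ κ g)⁻¹) * (s ^ κ g * (h * (s ^ κ h)⁻¹) * (s ^ κ g)⁻¹) = _
      rw [zpow_add]; group
    have h14 : g * h * (s ^ (κ g + κ h))⁻¹ ∈ N :=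
      h15 ▸ N.mul_mem (hκ g) nh'.2
    rw [hfwd (g * h) (κ g + κ h) h14]
    have h16 : W ^ κ g * π nh = π nh' * W ^ κ g := by rw [← h13]; group
    have h17 : (⟨g * (s ^ κ g)⁻¹, hκ g⟩ : N) * nh' = ⟨g * h * (s ^ (κ g + κ h))⁻¹, h14⟩ :=
      Subtype.ext h15
    calc π ⟨g * h * (s ^ (κ g + κ h))⁻¹, h14⟩ * W ^ (κ g + κ h)
        = π ((⟨g * (s ^ κ g)⁻¹, hκ g⟩ : N) * nh') * (W ^ κ g * W ^ κ h) := by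
          rw [h17, ← zpow_add]
      _ = π ⟨g * (s ^ κ g)⁻¹, hκ g⟩ * (π nh' * W ^ κ g) * W ^ κ h := by
          rw [map_mul]; group
      _ = π ⟨g * (s ^ κ g)⁻¹, hκ g⟩ * (W ^ κ g * π nh) * W ^ κ h := by rw [h16]
      _ = (π ⟨g * (s ^ κ g)⁻¹, hκ g⟩ * W ^ κ g) * (π nh * W ^ κ h) := by group
  refine ⟨MonoidHom.mk' f hmul, ?_⟩
  intro n
  show f ↑n = π n
  have h18 : (↑n : G) * (s ^ (0 : ℤ))⁻¹ ∈ N := by simp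
  rw [hfwd ↑n 0 h18]
  have h19 : (⟨(↑n : G) * (s ^ (0 : ℤ))⁻¹, h18⟩ : N) = n := Subtype.ext (by simp)
  rw [h19, zpow_zero, mul_one]
end
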